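/- arXiv:1405.4504 — 3 statements merged into one kernel-verified Lean document; each statement's English description precedes it below -/
import Mathlib

section
/- Let h, η : (−b,b)^d → H^d be two measurable bandwidth functions taking values in the countable set H^d, H = {e^{−s−2} : s ∈ ℕ}, and for κ ∈ (0,1/d), 𝔏 > 0 define H_d(κ,𝔏) as the set of such functions h with Σ_{s∈ℕ^d} ν_d(Λ_s[h])^κ ≤ 𝔏, where Λ_s[h] = {x : h_j(x) = e^{−s_j−2} for all j}. If h, η ∈ H_d(κ,𝔏), then the coordinatewise maximum h ∨ η belongs to H_d(dκ, (2𝔏)^d). -/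
open MeasureTheory
open scoped ENNReal BigOperators

private lemma aux_sum_rpow {ι : Type*} (F : Finset ι) (a : ι → ℝ≥0∞) {p : ℝ}
    (hp0 : 0 < p) (hp1 : p ≤ 1) :
    (∑ i ∈ F, a i) ^ p ≤ ∑ i ∈ F, a i ^ p := by
  classical
  induction F using Finset.induction_on with
  | empty => simp [ENNReal.zero_rpow_of_pos hp0]
  | insert _ _ hnot ih =>
      rename_i i F
      rw [Finset.sum_insert hnot, Finset.sum_insert hnot]
      calc (a i + ∑ x ∈ F, a x) ^ p ≤ a i ^ p + (∑ x ∈ F, a x) ^ p :=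
            ENNReal.rpow_add_le_add_rpow _ _ hp0.le hp1
        _ ≤ _ := add_le_add_right ih _

private lemma aux_tsum_rpow {ι : Type*} (a : ι → ℝ≥0∞) {p : ℝ}
    (hp0 : 0 < p) (hp1 : p ≤ 1) :
    (∑' i, a i) ^ p ≤ ∑' i, a i ^ p := by
  have key : ∑' i, a i ≤ (∑' i, a i ^ p) ^ (1 / p) := by
    rw [ENNReal.tsum_eq_iSup_sum]
    refine iSup_le fun F => ?_
    have h1 : ((∑ i ∈ F, a i) ^ p) ^ (1 / p) = ∑ i ∈ F, a i := by
      rw [← ENNReal.rpow_mul, mul_one_div, div_self hp0.ne', ENNReal.rpow_one]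
    calc ∑ i ∈ F, a i = ((∑ i ∈ F, a i) ^ p) ^ (1 / p) := h1.symm
      _ ≤ (∑ i ∈ F, a i ^ p) ^ (1 / p) :=
          ENNReal.rpow_le_rpow (aux_sum_rpow F a hp0 hp1) (by positivity)
      _ ≤ (∑' i, a i ^ p) ^ (1 / p) :=
          ENNReal.rpow_le_rpow (ENNReal.sum_le_tsum F) (by positivity)
  calc (∑' i, a i) ^ p ≤ (((∑' i, a i ^ p) ^ (1 / p))) ^ p :=
        ENNReal.rpow_le_rpow key hp0.le
    _ = ∑' i, a i ^ p := by
        rw [← ENNReal.rpow_mul, one_div, inv_mul_cancel₀ hp0.ne', ENNReal.rpow_one]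

private lemma aux_tsum_pi (n : ℕ) (g : Fin n → ℕ → ℝ≥0∞) :
    ∑' s : Fin n → ℕ, ∏ j, g j (s j) = ∏ j, ∑' t, g j t := by
  induction n with
  | zero =>
      simp only [Finset.univ_eq_empty, Finset.prod_empty]
      exact tsum_eq_single (fun i => i.elim0)
        (fun b hb => absurd (Subsingleton.elim b _) hb)
  | succ n ih =>
      rw [← (Fin.consEquiv (fun _ : Fin (n + 1) => ℕ)).tsum_eq]
      have key : ∀ p : ℕ × (Fin n → ℕ),
          (∏ j, g j ((Fin.consEquiv (fun _ : Fin (n + 1) => ℕ)) p j)) =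
            g 0 p.1 * ∏ j : Fin n, g j.succ (p.2 j) := by
        intro p
        rw [Fin.prod_univ_succ]
        simp [Fin.consEquiv]
      calc ∑' p : ℕ × (Fin n → ℕ), ∏ j, g j ((Fin.consEquiv (fun _ : Fin (n + 1) => ℕ)) p j)
          = ∑' p : ℕ × (Fin n → ℕ), g 0 p.1 * ∏ j : Fin n, g j.succ (p.2 j) :=
            tsum_congr key
        _ = ∑' a : ℕ, ∑' s : Fin n → ℕ, g 0 a * ∏ j : Fin n, g j.succ (s j) :=
            ENNReal.tsum_prod'
        _ = ∑' a : ℕ, g 0 a * ∑' s : Fin n → ℕ, ∏ j : Fin n, g j.succ (s j) := by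
            exact tsum_congr fun a => ENNReal.tsum_mul_left
        _ = (∑' a : ℕ, g 0 a) * ∑' s : Fin n → ℕ, ∏ j : Fin n, g j.succ (s j) :=
            ENNReal.tsum_mul_right
        _ = ∏ j, ∑' t, g j t := by
            rw [ih fun j => g j.succ, Fin.prod_univ_succ]

private def auxSigmaEquiv (d : ℕ) (j : Fin d) :
    (Σ t : ℕ, {s : Fin d → ℕ // s j = t}) ≃ (Fin d → ℕ) where
  toFun p := p.2.1
  invFun s := ⟨s j, s, rfl⟩
  left_inv := by rintro ⟨t, s, rfl⟩; rfl
  right_inv s := rfl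

private lemma aux_coord {d : ℕ} {b κ : ℝ} (hκ0 : 0 < κ) (hκ1 : κ ≤ 1)
    (F : (Fin d → ℝ) → Fin d → ℝ)
    (hFH : ∀ x ∈ Set.univ.pi fun _ : Fin d => Set.Ioo (-b) b,
      ∀ j, ∃ s : ℕ, F x j = Real.exp (-(s : ℝ) - 2))
    (j : Fin d) (L : ℝ≥0∞)
    (hF : ∑' s : Fin d → ℕ,
        (volume {x : Fin d → ℝ | x ∈ (Set.univ.pi fun _ : Fin d => Set.Ioo (-b) b) ∧
          ∀ j, F x j = Real.exp (-(s j : ℝ) - 2)}) ^ κ ≤ L) :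
    ∑' t : ℕ,
      (volume {x : Fin d → ℝ | x ∈ (Set.univ.pi fun _ : Fin d => Set.Ioo (-b) b) ∧
        F x j = Real.exp (-(t : ℝ) - 2)}) ^ κ ≤ L := by
  classical
  set Box := Set.univ.pi fun _ : Fin d => Set.Ioo (-b) b with hBox
  have einj : ∀ s t : ℕ, Real.exp (-(s : ℝ) - 2) = Real.exp (-(t : ℝ) - 2) → s = t := by
    intro s t hst
    have h1 : -(s : ℝ) - 2 = -(t : ℝ) - 2 := Real.exp_injective hst
    have h2 : (s : ℝ) = t := by linarith
    exact_mod_cast h2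
  have cover : ∀ t : ℕ,
      {x : Fin d → ℝ | x ∈ Box ∧ F x j = Real.exp (-(t : ℝ) - 2)} ⊆
        ⋃ s : {s : Fin d → ℕ // s j = t},
          {x : Fin d → ℝ | x ∈ Box ∧ ∀ i, F x i = Real.exp (-(s.1 i : ℝ) - 2)} := by
    intro t x hx
    obtain ⟨hxB, hxj⟩ := hx
    choose s hs using hFH x hxB
    have hsj : s j = t := einj _ _ ((hs j).symm.trans hxj)
    exact Set.mem_iUnion.mpr ⟨⟨s, hsj⟩, hxB, hs⟩
  have step : ∀ t : ℕ,
      (volume {x : Fin d → ℝ | x ∈ Box ∧ F x j = Real.exp (-(t : ℝ) - 2)}) ^ κ ≤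
        ∑' s : {s : Fin d → ℕ // s j = t},
          (volume {x : Fin d → ℝ | x ∈ Box ∧
            ∀ i, F x i = Real.exp (-(s.1 i : ℝ) - 2)}) ^ κ := by
    intro t
    calc (volume {x : Fin d → ℝ | x ∈ Box ∧ F x j = Real.exp (-(t : ℝ) - 2)}) ^ κ
        ≤ (∑' s : {s : Fin d → ℕ // s j = t},
            volume {x : Fin d → ℝ | x ∈ Box ∧
              ∀ i, F x i = Real.exp (-(s.1 i : ℝ) - 2)}) ^ κ :=
          ENNReal.rpow_le_rpow
            ((measure_mono (cover t)).trans (measure_iUnion_le _)) hκ0.le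
      _ ≤ _ := aux_tsum_rpow _ hκ0 hκ1
  have hE := Equiv.tsum_eq (auxSigmaEquiv d j) fun s : Fin d → ℕ =>
    (volume {x : Fin d → ℝ | x ∈ Box ∧
      ∀ i, F x i = Real.exp (-(s i : ℝ) - 2)}) ^ κ
  calc ∑' t : ℕ,
      (volume {x : Fin d → ℝ | x ∈ Box ∧ F x j = Real.exp (-(t : ℝ) - 2)}) ^ κ
      ≤ ∑' t : ℕ, ∑' s : {s : Fin d → ℕ // s j = t},
          (volume {x : Fin d → ℝ | x ∈ Box ∧
            ∀ i, F x i = Real.exp (-(s.1 i : ℝ) - 2)}) ^ κ := ENNReal.tsum_le_tsum step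
    _ = ∑' p : Σ t : ℕ, {s : Fin d → ℕ // s j = t},
          (volume {x : Fin d → ℝ | x ∈ Box ∧
            ∀ i, F x i = Real.exp (-(p.2.1 i : ℝ) - 2)}) ^ κ := (ENNReal.tsum_sigma _).symm
    _ = ∑' s : Fin d → ℕ,
          (volume {x : Fin d → ℝ | x ∈ Box ∧
            ∀ i, F x i = Real.exp (-(s i : ℝ) - 2)}) ^ κ := hE
    _ ≤ L := hF

/-- If the bandwidth functions `h, η` (taking values in `H^d`, `H = {e^{−s−2}}`)
both belong to `H_d(κ,𝔏)`, then the coordinatewise maximum `h ∨ η`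
belongs to `H_d(dκ, (2𝔏)^d)`. -/
theorem stmt_4 (d : ℕ) (hd : 0 < d) (b κ 𝔏 : ℝ) (hb : 0 < b)
    (hκ : κ ∈ Set.Ioo (0 : ℝ) (1 / d)) (h𝔏 : 0 < 𝔏)
    (h η : (Fin d → ℝ) → Fin d → ℝ)
    (hhH : ∀ x ∈ Set.univ.pi fun _ : Fin d => Set.Ioo (-b) b,
      ∀ j, ∃ s : ℕ, h x j = Real.exp (-(s : ℝ) - 2))
    (hηH : ∀ x ∈ Set.univ.pi fun _ : Fin d => Set.Ioo (-b) b,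
      ∀ j, ∃ s : ℕ, η x j = Real.exp (-(s : ℝ) - 2))
    (hh : ∑' s : Fin d → ℕ,
        (volume {x : Fin d → ℝ | x ∈ (Set.univ.pi fun _ : Fin d => Set.Ioo (-b) b) ∧
          ∀ j, h x j = Real.exp (-(s j : ℝ) - 2)}) ^ κ ≤ ENNReal.ofReal 𝔏)
    (hη : ∑' s : Fin d → ℕ,
        (volume {x : Fin d → ℝ | x ∈ (Set.univ.pi fun _ : Fin d => Set.Ioo (-b) b) ∧
          ∀ j, η x j = Real.exp (-(s j : ℝ) - 2)}) ^ κ ≤ ENNReal.ofReal 𝔏) :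
    ∑' s : Fin d → ℕ,
        (volume {x : Fin d → ℝ | x ∈ (Set.univ.pi fun _ : Fin d => Set.Ioo (-b) b) ∧
          ∀ j, max (h x j) (η x j) = Real.exp (-(s j : ℝ) - 2)}) ^ ((d : ℝ) * κ)
      ≤ ENNReal.ofReal ((2 * 𝔏) ^ d) := by
  classical
  obtain ⟨hκ0, hκd⟩ := hκ
  have hd1 : (1 : ℝ) ≤ (d : ℝ) := by exact_mod_cast hd
  have hκ1 : κ ≤ 1 := hκd.le.trans (by rw [div_le_one (by linarith)]; exact hd1)
  set Box := Set.univ.pi fun _ : Fin d => Set.Ioo (-b) b with hBox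
  -- the per-coordinate bound for the max
  set g : Fin d → ℕ → ℝ≥0∞ := fun j t =>
    (volume {x : Fin d → ℝ | x ∈ Box ∧ h x j = Real.exp (-(t : ℝ) - 2)} +
     volume {x : Fin d → ℝ | x ∈ Box ∧ η x j = Real.exp (-(t : ℝ) - 2)}) ^ κ with hg
  have term_bound : ∀ s : Fin d → ℕ,
      (volume {x : Fin d → ℝ | x ∈ Box ∧
        ∀ j, max (h x j) (η x j) = Real.exp (-(s j : ℝ) - 2)}) ^ ((d : ℝ) * κ)
        ≤ ∏ j, g j (s j) := by
    intro s
    have hsub : ∀ j : Fin d,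
        {x : Fin d → ℝ | x ∈ Box ∧ ∀ i, max (h x i) (η x i) = Real.exp (-(s i : ℝ) - 2)} ⊆
          {x : Fin d → ℝ | x ∈ Box ∧ h x j = Real.exp (-(s j : ℝ) - 2)} ∪
          {x : Fin d → ℝ | x ∈ Box ∧ η x j = Real.exp (-(s j : ℝ) - 2)} := by
      intro j x hx
      obtain ⟨hxB, hxe⟩ := hx
      rcases max_choice (h x j) (η x j) with hc | hc
      · exact Or.inl ⟨hxB, hc.symm.trans (hxe j)⟩
      · exact Or.inr ⟨hxB, hc.symm.trans (hxe j)⟩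
    have hv : ∀ j : Fin d,
        volume {x : Fin d → ℝ | x ∈ Box ∧
          ∀ i, max (h x i) (η x i) = Real.exp (-(s i : ℝ) - 2)} ≤
        volume {x : Fin d → ℝ | x ∈ Box ∧ h x j = Real.exp (-(s j : ℝ) - 2)} +
        volume {x : Fin d → ℝ | x ∈ Box ∧ η x j = Real.exp (-(s j : ℝ) - 2)} :=
      fun j => (measure_mono (hsub j)).trans (measure_union_le _ _)
    calc (volume {x : Fin d → ℝ | x ∈ Box ∧
          ∀ i, max (h x i) (η x i) = Real.exp (-(s i : ℝ) - 2)}) ^ ((d : ℝ) * κ)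
        = ∏ _j : Fin d, (volume {x : Fin d → ℝ | x ∈ Box ∧
            ∀ i, max (h x i) (η x i) = Real.exp (-(s i : ℝ) - 2)}) ^ κ := by
          rw [Finset.prod_const, ← ENNReal.rpow_natCast, ← ENNReal.rpow_mul]
          simp [Finset.card_univ, mul_comm]
      _ ≤ ∏ j, g j (s j) :=
          Finset.prod_le_prod' fun j _ => ENNReal.rpow_le_rpow (hv j) hκ0.le
  have gsum : ∀ j : Fin d, ∑' t : ℕ, g j t ≤ ENNReal.ofReal (2 * 𝔏) := by
    intro j
    have h1 := aux_coord hκ0 hκ1 h hhH j (ENNReal.ofReal 𝔏) hh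
    have h2 := aux_coord hκ0 hκ1 η hηH j (ENNReal.ofReal 𝔏) hη
    calc ∑' t : ℕ, g j t
        ≤ ∑' t : ℕ,
            ((volume {x : Fin d → ℝ | x ∈ Box ∧ h x j = Real.exp (-(t : ℝ) - 2)}) ^ κ +
             (volume {x : Fin d → ℝ | x ∈ Box ∧ η x j = Real.exp (-(t : ℝ) - 2)}) ^ κ) :=
          ENNReal.tsum_le_tsum fun t => ENNReal.rpow_add_le_add_rpow _ _ hκ0.le hκ1
      _ = (∑' t : ℕ,
            (volume {x : Fin d → ℝ | x ∈ Box ∧ h x j = Real.exp (-(t : ℝ) - 2)}) ^ κ) +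
          ∑' t : ℕ,
            (volume {x : Fin d → ℝ | x ∈ Box ∧ η x j = Real.exp (-(t : ℝ) - 2)}) ^ κ :=
          ENNReal.tsum_add
      _ ≤ ENNReal.ofReal 𝔏 + ENNReal.ofReal 𝔏 := add_le_add h1 h2
      _ = ENNReal.ofReal (2 * 𝔏) := by
          rw [← ENNReal.ofReal_add h𝔏.le h𝔏.le, two_mul]
  calc ∑' s : Fin d → ℕ,
      (volume {x : Fin d → ℝ | x ∈ Box ∧
        ∀ j, max (h x j) (η x j) = Real.exp (-(s j : ℝ) - 2)}) ^ ((d : ℝ) * κ)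
      ≤ ∑' s : Fin d → ℕ, ∏ j, g j (s j) := ENNReal.tsum_le_tsum term_bound
    _ = ∏ j, ∑' t, g j t := aux_tsum_pi d g
    _ ≤ ∏ _j : Fin d, ENNReal.ofReal (2 * 𝔏) :=
        Finset.prod_le_prod' fun j _ => gsum j
    _ = ENNReal.ofReal ((2 * 𝔏) ^ d) := by
        rw [Finset.prod_const, Finset.card_univ, Fintype.card_fin,
          ENNReal.ofReal_pow (by linarith)]
end

section
/- Setting 1/γ = Σ_j 1/γ_j and γ_j = β_j τ(s)/τ(r_j) (for those j with r_j ≤ s, and γ_j = β_j otherwise), with τ(u) = 1 − 1/ω + 1/(uβ), 1/ω = Σ_j 1/(β_j r_j), 1/β = Σ_j 1/β_j, and 1/υ = Σ_j 1/(γ_j q_j) with q_j = s for r_j ≤ s and q_j = ∞ otherwise, one has the identity 1/ω − 1/υ = β(1/γ − 1/β)(1 − 1/ω). -/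
open scoped BigOperators

/-- The algebraic identity `1/ω − 1/υ = β(1/γ − 1/β)(1 − 1/ω)` relating the
anisotropy quantities, where `1/γ_j = τ(r_j)/(τ(s)β_j)` for `j ∈ J_±`
(`τ(u) = 1 − 1/ω + 1/(uβ)`, i.e. `1 − invω + invβ/u`), `1/γ_j = 1/β_j`
otherwise, and `1/υ = Σ_{j∈J_±} 1/(γ_j s)`. -/
theorem stmt_9 (d : ℕ) (hd : 0 < d) (β rr : Fin d → ℝ) (J : Finset (Fin d))
    (s : ℝ) (hs : 1 ≤ s)
    (hβ : ∀ j, 0 < β j) (hr : ∀ j ∈ J, 1 ≤ rr j) (hrs : ∀ j ∈ J, rr j ≤ s)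
    (invω invβ invγ invυ : ℝ)
    (hinvω : invω = ∑ j ∈ J, 1 / (β j * rr j))
    (hinvβ : invβ = ∑ j, 1 / β j)
    (hτs : 0 < 1 - invω + invβ / s)
    (hinvγ : invγ = (∑ j ∈ J, (1 - invω + invβ / rr j) / ((1 - invω + invβ / s) * β j))
        + ∑ j ∈ Jᶜ, 1 / β j)
    (hinvυ : invυ = (∑ j ∈ J, (1 - invω + invβ / rr j) / ((1 - invω + invβ / s) * β j)) / s) :
    invω - invυ = invβ⁻¹ * (invγ - invβ) * (1 - invω) := by
  have hs0 : (0:ℝ) < s := lt_of_lt_of_le one_pos hs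
  set T : ℝ := 1 - invω + invβ / s with hTdef
  have hT : T ≠ 0 := ne_of_gt hτs
  set A : ℝ := ∑ j ∈ J, (1 - invω + invβ / rr j) / (T * β j) with hAdef
  set B : ℝ := ∑ j ∈ J, 1 / β j with hBdef
  set C : ℝ := ∑ j ∈ Jᶜ, 1 / β j with hCdef
  have hβsplit : invβ = B + C := by
    rw [hinvβ, hBdef, hCdef, Finset.sum_add_sum_compl]
  have hβpos : 0 < invβ := by
    rw [hinvβ]
    have : Nonempty (Fin d) := ⟨⟨0, hd⟩⟩
    exact Finset.sum_pos (fun j _ => one_div_pos.mpr (hβ j)) Finset.univ_nonempty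
  have hβne : invβ ≠ 0 := ne_of_gt hβpos
  have hAT : A * T = (1 - invω) * B + invβ * invω := by
    calc A * T = ∑ j ∈ J, ((1 - invω) * (1 / β j) + invβ * (1 / (β j * rr j))) := by
          rw [hAdef, Finset.sum_mul]
          refine Finset.sum_congr rfl fun j hj => ?_
          have hβj : β j ≠ 0 := ne_of_gt (hβ j)
          have hrj : rr j ≠ 0 := ne_of_gt (lt_of_lt_of_le one_pos (hr j hj))
          field_simp
      _ = (1 - invω) * B + invβ * invω := by
          rw [Finset.sum_add_distrib, ← Finset.mul_sum, ← Finset.mul_sum,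
            ← hBdef, ← hinvω]
  have hA : A = ((1 - invω) * B + invβ * invω) / T := by
    rw [eq_div_iff hT, hAT]
  have hC : C = invβ - B := by linarith [hβsplit]
  have hsne : s ≠ 0 := ne_of_gt hs0
  have hST : s * T = s * (1 - invω) + invβ := by
    rw [hTdef]; field_simp
  have h1 : A / s * s = A := div_mul_cancel₀ A hsne
  have h2 : invβ⁻¹ * invβ = 1 := inv_mul_cancel₀ hβne
  have hTβ : s * T * invβ ≠ 0 := mul_ne_zero (mul_ne_zero hsne hT) hβne
  rw [hinvυ, hinvγ, hC]
  refine mul_right_cancel₀ hTβ ?_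
  linear_combination (-(T * invβ)) * h1 + (-((A - B) * (1 - invω) * s * T)) * h2 +
    (-(invβ + (1 - invω) * s)) * hAT + (invω * invβ + B * (1 - invω)) * hST
end

section
/- Varshamov–Gilbert type bound: for any integers m ≥ 4 and n with n/m ≥ 2, there exists a subset P of {0,1}^n such that every element a ∈ P has exactly m nonzero coordinates (Σ_k a_k = m), any two distinct elements a, a′ ∈ P satisfy Hamming distance ρ(a,a′) ≥ m/2, and |P| ≥ 2^{−m}(n/m − 1)^{m/2}. -/
open Finset

lemma vg_ball_bound (m q r : ℕ) (hq : 1 ≤ q) (c : Fin m → Fin q) :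
    (univ.filter fun g : Fin m → Fin q =>
      (univ.filter fun i => g i ≠ c i).card ≤ r).card ≤ 2 ^ m * q ^ r := by
  classical
  set T : Finset (Finset (Fin m)) := univ.filter fun S => S.card ≤ r with hT
  have hsub : (univ.filter fun g : Fin m → Fin q =>
      (univ.filter fun i => g i ≠ c i).card ≤ r) ⊆
      T.biUnion fun S => univ.filter fun g => ∀ i, i ∉ S → g i = c i := by
    intro g hg
    simp only [mem_filter, mem_univ, true_and] at hg
    refine mem_biUnion.2 ⟨univ.filter fun i => g i ≠ c i, ?_, ?_⟩
    · simp [hT, hg]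
    · simp only [mem_filter, mem_univ, true_and]
      intro i hi
      by_contra h
      exact hi (by simp [h])
  refine (card_le_card hsub).trans (card_biUnion_le.trans ?_)
  have hfib : ∀ S ∈ T, (univ.filter fun g : Fin m → Fin q => ∀ i, i ∉ S → g i = c i).card ≤ q ^ r := by
    intro S hS
    have h1 : (univ.filter fun g : Fin m → Fin q => ∀ i, i ∉ S → g i = c i).card
        ≤ (univ : Finset (S → Fin q)).card := by
      apply Finset.card_le_card_of_injOn (fun g (i : S) => g i) (fun _ _ => Finset.mem_univ _)
      intro g hg g' hg' h
      simp only [coe_filter, mem_univ, true_and, Set.mem_setOf_eq] at hg hg'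
      funext i
      by_cases hi : i ∈ S
      · exact congrFun h ⟨i, hi⟩
      · rw [hg i hi, hg' i hi]
    have h2 : (univ : Finset (S → Fin q)).card = q ^ S.card := by
      simp [Finset.card_univ, Fintype.card_fun]
    have hS' : S.card ≤ r := by simpa [hT] using hS
    exact h1.trans (h2.le.trans (pow_le_pow_right₀ hq hS'))
  calc (∑ S ∈ T, (univ.filter fun g : Fin m → Fin q => ∀ i, i ∉ S → g i = c i).card)
      ≤ ∑ _S ∈ T, q ^ r := Finset.sum_le_sum hfib
    _ = T.card * q ^ r := by rw [Finset.sum_const, smul_eq_mul]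
    _ ≤ 2 ^ m * q ^ r := by
        apply Nat.mul_le_mul_right
        calc T.card ≤ (univ : Finset (Finset (Fin m))).card := card_le_card (filter_subset _ _)
          _ = 2 ^ m := by simp [Finset.card_univ]

lemma vg_code_exists (m q d : ℕ) (hd : 1 ≤ d) (hq : 1 ≤ q) :
    ∃ C : Finset (Fin m → Fin q),
      (∀ f ∈ C, ∀ g ∈ C, f ≠ g → d ≤ (univ.filter fun i => f i ≠ g i).card) ∧
      q ^ m ≤ C.card * (2 ^ m * q ^ (d - 1)) := by
  classical
  have hne : ((univ : Finset (Finset (Fin m → Fin q))).filter fun C =>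
      ∀ f ∈ C, ∀ g ∈ C, f ≠ g → d ≤ (univ.filter fun i => f i ≠ g i).card).Nonempty :=
    ⟨∅, by simp⟩
  obtain ⟨C, hC, hmax⟩ := Finset.exists_max_image _ Finset.card hne
  simp only [mem_filter, mem_univ, true_and] at hC
  refine ⟨C, hC, ?_⟩
  -- covering property
  have hcov : ∀ g : Fin m → Fin q, ∃ c ∈ C, (univ.filter fun i => g i ≠ c i).card ≤ d - 1 := by
    intro g
    by_contra h
    push_neg at h
    have hgC : g ∉ C := by
      intro hgC
      have := h g hgC
      simp at this
    have hgood' : ∀ f ∈ insert g C, ∀ f' ∈ insert g C, f ≠ f' →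
        d ≤ (univ.filter fun i => f i ≠ f' i).card := by
      intro f hf f' hf' hne'
      rcases Finset.mem_insert.1 hf with hfg | hf
      · rcases Finset.mem_insert.1 hf' with hfg' | hf'
        · exact absurd (hfg.trans hfg'.symm) hne'
        · have h1 := h f' hf'
          have he : (univ.filter fun i => f i ≠ f' i) = (univ.filter fun i => g i ≠ f' i) := by
            rw [hfg]
          rw [he]
          omega
      · rcases Finset.mem_insert.1 hf' with hfg' | hf'
        · have h1 := h f hf
          have he : (univ.filter fun i => f i ≠ f' i) = (univ.filter fun i => g i ≠ f i) := by
            rw [hfg']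
            apply filter_congr; intro i _; simp [ne_comm]
          rw [he]
          omega
        · exact hC f hf f' hf' hne'
    have hle := hmax (insert g C)
      (by simp only [mem_filter, mem_univ, true_and]; exact hgood')
    rw [Finset.card_insert_of_notMem hgC] at hle
    omega
  have hcup : (univ : Finset (Fin m → Fin q)) ⊆
      C.biUnion fun c => univ.filter fun g => (univ.filter fun i => g i ≠ c i).card ≤ d - 1 := by
    intro g _
    obtain ⟨c, hc, hcd⟩ := hcov g
    exact mem_biUnion.2 ⟨c, hc, by simp [hcd]⟩
  calc q ^ m = (univ : Finset (Fin m → Fin q)).card := by simp [Finset.card_univ]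
    _ ≤ _ := card_le_card hcup
    _ ≤ ∑ c ∈ C, (univ.filter fun g : Fin m → Fin q => (univ.filter fun i => g i ≠ c i).card ≤ d - 1).card :=
        card_biUnion_le
    _ ≤ ∑ _c ∈ C, 2 ^ m * q ^ (d - 1) := Finset.sum_le_sum fun c _ => vg_ball_bound m q (d-1) hq c
    _ = C.card * (2 ^ m * q ^ (d - 1)) := by rw [Finset.sum_const, smul_eq_mul]


/-- Varshamov–Gilbert type bound: for integers `m ≥ 4` and `n ≥ 2m` there exists
a set `P ⊆ {0,1}^n` of binary vectors of exact weight `m`, pairwise at Hamming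
distance at least `m/2`, with `|P| ≥ 2^{−m}(n/m − 1)^{m/2}`. -/
theorem stmt_13 (m n : ℕ) (hm : 4 ≤ m) (hn : 2 * m ≤ n) :
    ∃ P : Finset (Fin n → Bool),
      (∀ a ∈ P, (Finset.univ.filter fun k => a k = true).card = m) ∧
      (∀ a ∈ P, ∀ a' ∈ P, a ≠ a' →
        (m : ℝ) / 2 ≤ ((Finset.univ.filter fun j => a j ≠ a' j).card : ℝ)) ∧
      (2 : ℝ) ^ (-(m : ℝ)) * ((n : ℝ) / m - 1) ^ ((m : ℝ) / 2) ≤ (P.card : ℝ) := by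
  classical
  have hm0 : 0 < m := by omega
  set q := n / m with hqdef
  have hq2 : 2 ≤ q := (Nat.le_div_iff_mul_le hm0).2 (by omega)
  have hq1 : 1 ≤ q := by omega
  have hmq : m * q ≤ n := Nat.mul_div_le n m
  set d := (m + 3) / 4 with hddef
  have hd1 : 1 ≤ d := by omega
  obtain ⟨C, hCdist, hCcard⟩ := vg_code_exists m q d hd1 hq1
  -- the embedding
  have hlt : ∀ (f : Fin m → Fin q) (i : Fin m), (i : ℕ) * q + (f i : ℕ) < n := by
    intro f i
    have h1 : ((i:ℕ) + 1) * q = (i:ℕ) * q + q := by ring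
    have h2 : ((i:ℕ) + 1) * q ≤ m * q := Nat.mul_le_mul_right q (by have := i.isLt; omega)
    have := (f i).isLt
    omega
  set ι : (Fin m → Fin q) → Fin m → Fin n :=
    fun f i => ⟨(i:ℕ) * q + (f i : ℕ), hlt f i⟩ with hι
  have key : ∀ (a b c e : ℕ), c < q → a < b → a * q + c < b * q + e := by
    intro a b c e hc hab
    have h1 : (a + 1) * q = a * q + q := by ring
    have h2 : (a + 1) * q ≤ b * q := Nat.mul_le_mul_right q (by omega)
    omega
  have hι_inj : ∀ (f f' : Fin m → Fin q) (i i' : Fin m),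
      ι f i = ι f' i' → i = i' ∧ (f i : ℕ) = (f' i' : ℕ) := by
    intro f f' i i' h
    have hv : (i:ℕ) * q + (f i:ℕ) = (i':ℕ) * q + (f' i':ℕ) := congrArg Fin.val h
    have hii : (i:ℕ) = (i':ℕ) := by
      rcases Nat.lt_trichotomy (i:ℕ) (i':ℕ) with hlt'|he|hgt
      · exact absurd hv (Nat.ne_of_lt (key _ _ _ _ (f i).isLt hlt'))
      · exact he
      · exact absurd hv.symm (Nat.ne_of_lt (key _ _ _ _ (f' i').isLt hgt))
    refine ⟨Fin.ext hii, ?_⟩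
    rw [hii] at hv
    omega
  set φ : (Fin m → Fin q) → (Fin n → Bool) := fun f j => decide (∃ i, ι f i = j) with hφdef
  have hφtrue : ∀ f j, φ f j = true ↔ ∃ i, ι f i = j := by
    intro f j; simp [hφdef]
  have hιinj1 : ∀ f : Fin m → Fin q, Function.Injective (ι f) :=
    fun f i i' h => (hι_inj f f i i' h).1
  -- weight
  have hwcard : ∀ f, (univ.filter fun k => φ f k = true).card = m := by
    intro f
    have : (univ.filter fun k => φ f k = true) = univ.image (ι f) := by
      ext j
      simp only [mem_filter, mem_univ, true_and, mem_image, hφtrue]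
    rw [this, Finset.card_image_of_injective _ (hιinj1 f)]
    simp
  -- injectivity of φ
  have hφinj : Function.Injective φ := by
    intro f f' h
    funext i
    have h1 : φ f' (ι f i) = true := by rw [← h]; exact (hφtrue f _).2 ⟨i, rfl⟩
    obtain ⟨i', hi'⟩ := (hφtrue f' _).1 h1
    obtain ⟨hii, hval⟩ := hι_inj f' f i' i hi'
    exact Fin.ext (by rw [← hval, hii])
  -- distance
  have hdist : ∀ f ∈ C, ∀ f' ∈ C, f ≠ f' →
      (m : ℝ) / 2 ≤ ((univ.filter fun j => φ f j ≠ φ f' j).card : ℝ) := by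
    intro f hf f' hf' hne
    set D := univ.filter fun i => f i ≠ f' i with hD
    have hDd : d ≤ D.card := hCdist f hf f' hf' hne
    have hmm : ∀ (g g' : Fin m → Fin q), ∀ i ∈ D, g = f ∨ g = f' → g' = f ∨ g' = f' →
        True := fun _ _ _ _ _ _ => trivial
    have hsub : (D.image (ι f)) ∪ (D.image (ι f')) ⊆
        univ.filter fun j => φ f j ≠ φ f' j := by
      intro j hj
      simp only [mem_union, mem_image] at hj
      simp only [mem_filter, mem_univ, true_and]
      rcases hj with ⟨i, hiD, rfl⟩ | ⟨i, hiD, rfl⟩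
      · have h1 : φ f (ι f i) = true := (hφtrue f _).2 ⟨i, rfl⟩
        have h2 : φ f' (ι f i) = false := by
          rw [Bool.eq_false_iff]
          intro hcon
          obtain ⟨i', hi'⟩ := (hφtrue f' _).1 hcon
          obtain ⟨hii, hval⟩ := hι_inj f' f i' i hi'
          rw [hii] at hval
          have heq : f i = f' i := Fin.ext hval.symm
          simp [hD, heq] at hiD
        simp [h1, h2]
      · have h1 : φ f' (ι f' i) = true := (hφtrue f' _).2 ⟨i, rfl⟩
        have h2 : φ f (ι f' i) = false := by
          rw [Bool.eq_false_iff]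
          intro hcon
          obtain ⟨i', hi'⟩ := (hφtrue f _).1 hcon
          obtain ⟨hii, hval⟩ := hι_inj f f' i' i hi'
          rw [hii] at hval
          have heq : f i = f' i := Fin.ext hval
          simp [hD, heq] at hiD
        simp [h1, h2]
    have hdisj : Disjoint (D.image (ι f)) (D.image (ι f')) := by
      rw [Finset.disjoint_left]
      intro j hj1 hj2
      simp only [mem_image] at hj1 hj2
      obtain ⟨i, hiD, hji⟩ := hj1
      obtain ⟨i', hiD', hji'⟩ := hj2
      obtain ⟨hii, hval⟩ := hι_inj f f' i i' (hji.trans hji'.symm)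
      rw [← hii] at hval
      have heq : f i = f' i := Fin.ext hval
      simp [hD, heq] at hiD
    have hcard2 : 2 * D.card ≤ (univ.filter fun j => φ f j ≠ φ f' j).card := by
      have h1 := card_le_card hsub
      rw [Finset.card_union_of_disjoint hdisj,
        Finset.card_image_of_injective _ (hιinj1 f),
        Finset.card_image_of_injective _ (hιinj1 f')] at h1
      omega
    have hnat : m ≤ 2 * (univ.filter fun j => φ f j ≠ φ f' j).card := by
      have h4d : m ≤ 4 * d := by omega
      omega
    have := (Nat.cast_le (α := ℝ)).2 hnat
    push_cast at this
    linarith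
  refine ⟨C.image φ, ?_, ?_, ?_⟩
  · intro a ha
    obtain ⟨f, _, rfl⟩ := mem_image.1 ha
    exact hwcard f
  · intro a ha a' ha' hne
    obtain ⟨f, hf, rfl⟩ := mem_image.1 ha
    obtain ⟨f', hf', rfl⟩ := mem_image.1 ha'
    exact hdist f hf f' hf' (fun h => hne (by rw [h]))
  · -- cardinality bound
    rw [Finset.card_image_of_injective _ hφinj]
    set t := (m + 1) / 2 with htdef
    have hQ1 : (1:ℝ) ≤ (q:ℝ) := by exact_mod_cast hq1
    have hnm : (n:ℕ) < m * q + m := by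
      have h1 := Nat.lt_mul_div_succ n hm0
      calc n < m * (n / m + 1) := h1
        _ = m * q + m := by rw [hqdef]; ring
    have hm0' : (0:ℝ) < m := by exact_mod_cast hm0
    have hbq : (n:ℝ) / m - 1 ≤ (q:ℝ) := by
      have : (n:ℝ) < m * q + m := by exact_mod_cast hnm
      rw [sub_le_iff_le_add, div_le_iff₀ hm0']
      nlinarith
    have hb0 : (0:ℝ) ≤ (n:ℝ) / m - 1 := by
      have h2 : (2:ℝ) * m ≤ n := by exact_mod_cast hn
      rw [sub_nonneg, le_div_iff₀ hm0']
      linarith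
    have step1 : ((n:ℝ) / m - 1) ^ ((m:ℝ)/2) ≤ (q:ℝ) ^ ((m:ℝ)/2) :=
      Real.rpow_le_rpow hb0 hbq (by positivity)
    have step2 : (q:ℝ) ^ ((m:ℝ)/2) ≤ (q:ℝ) ^ ((t:ℕ):ℝ) := by
      apply Real.rpow_le_rpow_of_exponent_le hQ1
      have : (m:ℕ) ≤ 2 * t := by omega
      have := (Nat.cast_le (α := ℝ)).2 this
      push_cast at this
      linarith
    have step3 : (q:ℝ) ^ ((t:ℕ):ℝ) = (q:ℝ) ^ (t:ℕ) := Real.rpow_natCast _ _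
    have step4 : (q:ℝ) ^ (t:ℕ) ≤ (q:ℝ) ^ (m - (d-1)) := by
      apply pow_le_pow_right₀ hQ1
      omega
    have hqpow0 : (0:ℝ) < (q:ℝ) ^ (d-1) := by positivity
    have hcast : (q:ℝ) ^ m ≤ (C.card : ℝ) * (2 ^ m * (q:ℝ) ^ (d-1)) := by
      exact_mod_cast hCcard
    have step5 : (q:ℝ) ^ (m - (d-1)) ≤ 2 ^ m * (C.card : ℝ) := by
      rw [← mul_le_mul_iff_of_pos_right hqpow0, ← pow_add]
      have hmd : m - (d-1) + (d-1) = m := by omega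
      rw [hmd]
      calc (q:ℝ) ^ m ≤ (C.card : ℝ) * (2 ^ m * (q:ℝ) ^ (d-1)) := hcast
        _ = 2 ^ m * (C.card:ℝ) * (q:ℝ) ^ (d-1) := by ring
    have h2rw : (2:ℝ) ^ (-(m:ℝ)) = ((2:ℝ) ^ m)⁻¹ := by
      rw [← Real.rpow_natCast 2 m, ← Real.rpow_neg (by norm_num)]
    rw [h2rw, inv_mul_le_iff₀ (by positivity)]
    calc ((n:ℝ) / m - 1) ^ ((m:ℝ)/2) ≤ (q:ℝ) ^ (m - (d-1)) := by
          rw [← step3] at step4; linarith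
      _ ≤ 2 ^ m * (C.card:ℝ) := step5
end
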